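/- Under the dissipativity assumption −∇U(x)·x ≤ −r‖x‖² + M, the gradient of the modified potential satisfies ∇_x H_ε(x)·x ≥ (r/(M₄+ε₀))‖x‖² − (M₅+1)M/ε for all x, where M₄ bounds f and M₅ bounds f′ on [0, M₃]. -/

import Mathlib

open Real Filter Topology

/-- Lower bound on `∇_x H_ε(x)·x` under the dissipativity assumption on `U`:
`∇_x H_ε(x)·x = [(1 + f′((U(x)−c)₊))/(f((U(x)−c)₊)+ε)] ∇U(x)·x
  ≥ (r/(M₄+ε₀))‖x‖² − (M₅+1)M/ε`. -/
theorem stmt9 {d : ℕ} (U : EuclideanSpace ℝ (Fin d) → ℝ) (f : ℝ → ℝ)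
    (r M M₃ M₄ M₅ c ε ε₀ : ℝ)
    (hr : 0 < r) (hM : 0 < M) (hM₃ : 0 < M₃) (hM₄ : 0 < M₄) (hM₅ : 0 ≤ M₅)
    (hU : ContDiff ℝ 1 U)
    (hdiss : ∀ x, r * ‖x‖ ^ 2 - M ≤ (inner ℝ (gradient U x) x : ℝ))
    (hf : ContDiff ℝ 1 f) (hfmono : Monotone f) (hfnn : ∀ s, 0 ≤ f s)
    (hfub : ∀ s, f s ≤ M₄)
    (hf0 : f 0 = 0) (hf'0 : deriv f 0 = 0)
    (hf' : ∀ s ∈ Set.Icc (0 : ℝ) M₃, deriv f s ≤ M₅)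
    (hfM₃ : ∀ s, M₃ ≤ s → f s = M₄)
    (hf'M₃ : ∀ s, M₃ ≤ s → deriv f s = 0)
    (hε : 0 < ε) (hεε₀ : ε ≤ ε₀) :
    ∀ x,
      (r / (M₄ + ε₀)) * ‖x‖ ^ 2 - (M₅ + 1) * M / ε
        ≤ ((1 + deriv f (max (U x - c) 0)) / (f (max (U x - c) 0) + ε))
            * (inner ℝ (gradient U x) x : ℝ) := by
  intro x
  set s : ℝ := max (U x - c) 0 with hs
  set g : ℝ := (inner ℝ (gradient U x) x : ℝ) with hgdef
  set n : ℝ := ‖x‖ ^ 2 with hn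
  have hsnn : 0 ≤ s := le_max_right _ _
  have hD0 : 0 ≤ deriv f s := by
    have hd : HasDerivAt f (deriv f s) s :=
      ((hf.differentiable one_ne_zero) s).hasDerivAt
    have hts : Filter.Tendsto (slope f s) (𝓝[>] s) (𝓝 (deriv f s)) :=
      (hasDerivAt_iff_tendsto_slope.1 hd).mono_left
        (nhdsWithin_mono s fun t ht => ne_of_gt ht)
    refine ge_of_tendsto hts ?_
    filter_upwards [self_mem_nhdsWithin] with t ht
    have h1 : s < t := ht
    have h2 : f s ≤ f t := hfmono h1.le
    rw [slope_def_field]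
    exact div_nonneg (by linarith) (by linarith)
  have hDM : deriv f s ≤ M₅ := by
    rcases le_or_gt s M₃ with h | h
    · exact hf' s ⟨hsnn, h⟩
    · rw [hf'M₃ s h.le]; exact hM₅
  have hF0 : 0 ≤ f s := hfnn s
  have hFM : f s ≤ M₄ := hfub s
  have hA : 0 < f s + ε := by linarith
  have hB : 0 < M₄ + ε₀ := by linarith
  have hAB : f s + ε ≤ M₄ + ε₀ := by linarith
  have hg : r * n - M ≤ g := hdiss x
  have hnn : (0:ℝ) ≤ n := by positivity
  set D : ℝ := deriv f s with hDdef
  set F : ℝ := f s with hFdef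
  rcases le_or_gt 0 g with hg0 | hg0
  · have hcoef : 1 / (M₄ + ε₀) ≤ (1 + D) / (F + ε) :=
      div_le_div₀ (by linarith) (by linarith) hA hAB
    calc r / (M₄ + ε₀) * n - (M₅ + 1) * M / ε
        ≤ r / (M₄ + ε₀) * n - M / (M₄ + ε₀) := by
          have h3 : M / (M₄ + ε₀) ≤ (M₅ + 1) * M / ε :=
            div_le_div₀ (by nlinarith) (by nlinarith) hε (by linarith)
          linarith
      _ = (r * n - M) / (M₄ + ε₀) := by ring
      _ ≤ g / (M₄ + ε₀) := (div_le_div_iff_of_pos_right hB).mpr hg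
      _ = (1 / (M₄ + ε₀)) * g := by ring
      _ ≤ ((1 + D) / (F + ε)) * g := mul_le_mul_of_nonneg_right hcoef hg0
  · have hcoef : (1 + D) / (F + ε) ≤ (M₅ + 1) / ε :=
      div_le_div₀ (by linarith) (by linarith) hε (by linarith)
    calc r / (M₄ + ε₀) * n - (M₅ + 1) * M / ε
        ≤ ((M₅ + 1) * r / ε) * n - (M₅ + 1) * M / ε := by
          have h4 : r / (M₄ + ε₀) ≤ (M₅ + 1) * r / ε :=
            div_le_div₀ (by nlinarith) (by nlinarith) hε (by linarith)
          nlinarith [mul_le_mul_of_nonneg_right h4 hnn]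
      _ = ((M₅ + 1) / ε) * (r * n - M) := by ring
      _ ≤ ((M₅ + 1) / ε) * g := mul_le_mul_of_nonneg_left hg (by positivity)
      _ ≤ ((1 + D) / (F + ε)) * g := mul_le_mul_of_nonpos_right hcoef hg0.le
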